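/- If the MPC optimization problem with terminal set Z_f (positively invariant under v = Kz, with K Z_f ⊆ V and terminal cost decrease ‖(A+BK)z‖²_{Q_f} - ‖z‖²_{Q_f} ≤ -‖z‖²_Q - ‖Kz‖²_R on Z_f) is feasible at state z with optimal solution (z_0*, ..., z_N*, v_0*, ..., v_{N-1}*), then the shifted sequence V̄ = (v_1*, ..., v_{N-1}*, K z_N*) is feasible for the problem at the successor nominal state z_1* = A z + B v_0*, and the corresponding cost satisfies J(z_1*, V̄) ≤ J*(z) - ‖z‖²_Q - ‖v_0*‖²_R. Hence J*(z_1*) ≤ J*(z) - ‖z‖²_Q - ‖v_0*‖²_R. -/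

import Mathlib

open Matrix Finset

variable {nx nu : ℕ}

/-- Nominal state trajectory `z_{i+1} = A z_i + B v_i`, `z_0 = s`. -/
noncomputable def mpcTraj (A : Matrix (Fin nx) (Fin nx) ℝ) (B : Matrix (Fin nx) (Fin nu) ℝ)
    (v : ℕ → Fin nu → ℝ) (s : Fin nx → ℝ) : ℕ → Fin nx → ℝ
  | 0 => s
  | k + 1 => A.mulVec (mpcTraj A B v s k) + B.mulVec (v k)

/-- MPC cost `‖z_N‖²_{Q_f} + Σ_{i<N} (‖z_i‖²_Q + ‖v_i‖²_R)`. -/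
noncomputable def mpcCost (A : Matrix (Fin nx) (Fin nx) ℝ) (B : Matrix (Fin nx) (Fin nu) ℝ)
    (Qf Q : Matrix (Fin nx) (Fin nx) ℝ) (R : Matrix (Fin nu) (Fin nu) ℝ) (N : ℕ)
    (v : ℕ → Fin nu → ℝ) (s : Fin nx → ℝ) : ℝ :=
  mpcTraj A B v s N ⬝ᵥ Qf.mulVec (mpcTraj A B v s N) +
    ∑ i ∈ range N, (mpcTraj A B v s i ⬝ᵥ Q.mulVec (mpcTraj A B v s i) +
      v i ⬝ᵥ R.mulVec (v i))

/-- Feasibility of an input sequence for the MPC problem with state constraint `Zset`,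
input constraint `Vset` and terminal set `Zf`. -/
def mpcFeasible (A : Matrix (Fin nx) (Fin nx) ℝ) (B : Matrix (Fin nx) (Fin nu) ℝ)
    (Zset : Set (Fin nx → ℝ)) (Vset : Set (Fin nu → ℝ)) (Zf : Set (Fin nx → ℝ)) (N : ℕ)
    (v : ℕ → Fin nu → ℝ) (s : Fin nx → ℝ) : Prop :=
  (∀ i < N, mpcTraj A B v s i ∈ Zset ∧ v i ∈ Vset) ∧ mpcTraj A B v s N ∈ Zf

/-- **Recursive feasibility and cost decrease of the shifted sequence.**
Under the standard terminal ingredients (invariance of `Z_f` under `v = Kz`,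
`K Z_f ⊆ V`, `Z_f ⊆ Z`, terminal cost decrease), if `v*` is an optimal feasible input
sequence at `s`, then the shifted sequence `v̄ = (v*_1, …, v*_{N-1}, K z*_N)` is feasible
at `z_1* = A s + B v*_0` with
`J(z_1*, v̄) ≤ J*(s) - ‖s‖²_Q - ‖v*_0‖²_R`, and hence `J*(z_1*) ≤ J*(s) - ‖s‖²_Q - ‖v*_0‖²_R`. -/
theorem mpc_shifted_feasible_cost_decrease
    (A : Matrix (Fin nx) (Fin nx) ℝ) (B : Matrix (Fin nx) (Fin nu) ℝ)
    (K : Matrix (Fin nu) (Fin nx) ℝ)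
    (Qf Q : Matrix (Fin nx) (Fin nx) ℝ) (R : Matrix (Fin nu) (Fin nu) ℝ)
    (hQf : Qf.PosDef) (hQ : Q.PosDef) (hR : R.PosDef)
    (Zset Zf : Set (Fin nx → ℝ)) (Vset : Set (Fin nu → ℝ))
    (hZfZ : Zf ⊆ Zset)
    (hinv : ∀ z ∈ Zf, (A + B * K).mulVec z ∈ Zf)
    (hKV : ∀ z ∈ Zf, K.mulVec z ∈ Vset)
    (hterm : ∀ z ∈ Zf,
      (A + B * K).mulVec z ⬝ᵥ Qf.mulVec ((A + B * K).mulVec z) - z ⬝ᵥ Qf.mulVec z ≤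
        -(z ⬝ᵥ Q.mulVec z) - K.mulVec z ⬝ᵥ R.mulVec (K.mulVec z))
    (N : ℕ) (hN : 1 ≤ N) (s : Fin nx → ℝ) (vstar : ℕ → Fin nu → ℝ)
    (hfeas : mpcFeasible A B Zset Vset Zf N vstar s)
    (hopt : ∀ v, mpcFeasible A B Zset Vset Zf N v s →
      mpcCost A B Qf Q R N vstar s ≤ mpcCost A B Qf Q R N v s) :
    mpcFeasible A B Zset Vset Zf N
        (fun i => if i + 1 < N then vstar (i + 1)
          else K.mulVec (mpcTraj A B vstar s N))
        (A.mulVec s + B.mulVec (vstar 0)) ∧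
    mpcCost A B Qf Q R N
        (fun i => if i + 1 < N then vstar (i + 1)
          else K.mulVec (mpcTraj A B vstar s N))
        (A.mulVec s + B.mulVec (vstar 0)) ≤
      mpcCost A B Qf Q R N vstar s -
        (s ⬝ᵥ Q.mulVec s) - (vstar 0 ⬝ᵥ R.mulVec (vstar 0)) ∧
    sInf {c : ℝ | ∃ v, mpcFeasible A B Zset Vset Zf N v (A.mulVec s + B.mulVec (vstar 0)) ∧
        c = mpcCost A B Qf Q R N v (A.mulVec s + B.mulVec (vstar 0))} ≤
      mpcCost A B Qf Q R N vstar s -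
        (s ⬝ᵥ Q.mulVec s) - (vstar 0 ⬝ᵥ R.mulVec (vstar 0)) := by
  obtain ⟨M, rfl⟩ : ∃ M, N = M + 1 := ⟨N - 1, by omega⟩
  set zN := mpcTraj A B vstar s (M + 1) with hzN
  set vbar : ℕ → Fin nu → ℝ :=
    (fun i => if i + 1 < M + 1 then vstar (i + 1) else K.mulVec zN) with hvbar
  set s' := A.mulVec s + B.mulVec (vstar 0) with hs'
  obtain ⟨hfs, hft⟩ := hfeas
  have hzNZf : zN ∈ Zf := hft
  -- shifted trajectory identity for i ≤ M
  have hshift : ∀ i, i ≤ M → mpcTraj A B vbar s' i = mpcTraj A B vstar s (i + 1) := by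
    intro i
    induction i with
    | zero => intro _; simp [mpcTraj, hs']
    | succ k ih =>
      intro hk
      have hk' : k ≤ M := by omega
      have hlt : k + 1 < M + 1 := by omega
      simp only [mpcTraj, ih hk']
      simp only [hvbar, if_pos hlt]
  have htermtraj : mpcTraj A B vbar s' (M + 1) = (A + B * K).mulVec zN := by
    have hM : mpcTraj A B vbar s' M = zN := by
      simpa using hshift M le_rfl
    simp only [mpcTraj, hM]
    simp only [hvbar, lt_irrefl, if_neg (lt_irrefl (M + 1))]
    rw [Matrix.add_mulVec, ← Matrix.mulVec_mulVec]
  -- feasibility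
  have hfeas' : mpcFeasible A B Zset Vset Zf (M + 1) vbar s' := by
    constructor
    · intro i hi
      have hiM : i ≤ M := by omega
      rw [hshift i hiM]
      constructor
      · by_cases h : i + 1 < M + 1
        · exact (hfs (i + 1) h).1
        · have : i = M := by omega
          subst this
          exact hZfZ hzNZf
      · by_cases h : i + 1 < M + 1
        · simp only [hvbar, if_pos h]
          exact (hfs (i + 1) h).2
        · simp only [hvbar, if_neg h]
          exact hKV zN hzNZf
    · rw [htermtraj]
      exact hinv zN hzNZf
  -- cost comparison
  have hcost : mpcCost A B Qf Q R (M + 1) vbar s' ≤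
      mpcCost A B Qf Q R (M + 1) vstar s -
        (s ⬝ᵥ Q.mulVec s) - (vstar 0 ⬝ᵥ R.mulVec (vstar 0)) := by
    have hsum : ∑ i ∈ range (M + 1),
        (mpcTraj A B vbar s' i ⬝ᵥ Q.mulVec (mpcTraj A B vbar s' i) +
          vbar i ⬝ᵥ R.mulVec (vbar i)) =
        (∑ i ∈ range M,
          (mpcTraj A B vstar s (i + 1) ⬝ᵥ Q.mulVec (mpcTraj A B vstar s (i + 1)) +
            vstar (i + 1) ⬝ᵥ R.mulVec (vstar (i + 1)))) +
        (zN ⬝ᵥ Q.mulVec zN + K.mulVec zN ⬝ᵥ R.mulVec (K.mulVec zN)) := by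
      rw [Finset.sum_range_succ]
      congr 1
      · apply Finset.sum_congr rfl
        intro i hi
        rw [Finset.mem_range] at hi
        have h1 : i + 1 < M + 1 := by omega
        rw [hshift i (by omega)]
        simp only [hvbar, if_pos h1]
      · have hM : mpcTraj A B vbar s' M = zN := by simpa using hshift M le_rfl
        rw [hM]
        simp only [hvbar, if_neg (lt_irrefl (M + 1))]
    have hsum' : ∑ i ∈ range (M + 1),
        (mpcTraj A B vstar s i ⬝ᵥ Q.mulVec (mpcTraj A B vstar s i) +
          vstar i ⬝ᵥ R.mulVec (vstar i)) =
        (∑ i ∈ range M,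
          (mpcTraj A B vstar s (i + 1) ⬝ᵥ Q.mulVec (mpcTraj A B vstar s (i + 1)) +
            vstar (i + 1) ⬝ᵥ R.mulVec (vstar (i + 1)))) +
        (s ⬝ᵥ Q.mulVec s + vstar 0 ⬝ᵥ R.mulVec (vstar 0)) := by
      rw [Finset.sum_range_succ']
      simp [mpcTraj]
    have hdec := hterm zN hzNZf
    unfold mpcCost
    rw [hsum, hsum', htermtraj]
    linarith
  refine ⟨hfeas', hcost, ?_⟩
  -- sInf bound
  have hnonneg : ∀ (v : ℕ → Fin nu → ℝ) (t : Fin nx → ℝ),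
      0 ≤ mpcCost A B Qf Q R (M + 1) v t := by
    intro v t
    have h1 : ∀ (x : Fin nx → ℝ), 0 ≤ x ⬝ᵥ Qf.mulVec x := by
      intro x
      have := hQf.posSemidef.re_dotProduct_nonneg x
      simpa using this
    have h2 : ∀ (x : Fin nx → ℝ), 0 ≤ x ⬝ᵥ Q.mulVec x := by
      intro x
      have := hQ.posSemidef.re_dotProduct_nonneg x
      simpa using this
    have h3 : ∀ (x : Fin nu → ℝ), 0 ≤ x ⬝ᵥ R.mulVec x := by
      intro x
      have := hR.posSemidef.re_dotProduct_nonneg x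
      simpa using this
    unfold mpcCost
    have : 0 ≤ ∑ i ∈ range (M + 1),
        (mpcTraj A B v t i ⬝ᵥ Q.mulVec (mpcTraj A B v t i) + v i ⬝ᵥ R.mulVec (v i)) :=
      Finset.sum_nonneg fun i _ => add_nonneg (h2 _) (h3 _)
    linarith [h1 (mpcTraj A B v t (M + 1))]
  have hmem : mpcCost A B Qf Q R (M + 1) vbar s' ∈
      {c : ℝ | ∃ v, mpcFeasible A B Zset Vset Zf (M + 1) v s' ∧
        c = mpcCost A B Qf Q R (M + 1) v s'} := ⟨vbar, hfeas', rfl⟩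
  have hbdd : BddBelow {c : ℝ | ∃ v, mpcFeasible A B Zset Vset Zf (M + 1) v s' ∧
      c = mpcCost A B Qf Q R (M + 1) v s'} := by
    refine ⟨0, fun c hc => ?_⟩
    obtain ⟨v, _, rfl⟩ := hc
    exact hnonneg v s'
  exact le_trans (csInf_le hbdd hmem) hcost
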